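/- For every integer k ≥ 1 and all integers 1 ≤ i₁ ≤ i₂ ≤ i₃ ≤ i₄, if i₂ ≥ i₁ + k or i₄ ≥ i₃ + k, then ∫_I ξ^{(k)}_{i₁}(x)·ξ^{(k)}_{i₂}(x)·ξ^{(k)}_{i₃}(x)·ξ^{(k)}_{i₄}(x) dx = 0. -/

import Mathlib

open MeasureTheory

/-- Center of the interval of the partition `H_i` of `I = (−1/2, 1/2)` into intervals
of length `δ^i` which contains `x`. -/
noncomputable def ctr (δ : ℝ) (i : ℕ) (x : ℝ) : ℝ :=
  -(1 / 2) + ((⌊(x + 1 / 2) / δ ^ i⌋ : ℝ) + 1 / 2) * δ ^ i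

/-- ξ′^{(k)}_i(x) = 1 if x lies in the central subinterval of relative length τ^k of
its interval of the partition H_i, and 0 otherwise. -/
noncomputable def xiP (δ τ : ℝ) (k i : ℕ) (x : ℝ) : ℝ :=
  if |x - ctr δ i x| < τ ^ k * δ ^ i / 2 then 1 else 0

/-- ξ^{(k)}_i = ξ′^{(k)}_i − τ^k. -/
noncomputable def xiM (δ τ : ℝ) (k i : ℕ) (x : ℝ) : ℝ :=
  xiP δ τ k i x - τ ^ k

/-- Discrete indicator: `1` on the central window of each period `2R`, else `0`. -/
noncomputable def st16chi (R S n : ℕ) : ℝ :=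
  if R - S ≤ n % (2 * R) ∧ n % (2 * R) < R + S then 1 else 0

lemma st16_eq_of_mod (K X : ℕ) (h0 : 0 < X) (h2 : X < 2 * K) (hm : X % K = 0) : X = K := by
  obtain ⟨c, hc⟩ := Nat.dvd_of_mod_eq_zero hm
  have hK : 0 < K := by
    rcases Nat.eq_zero_or_pos K with h | h
    · subst h; omega
    · exact h
  have hc2 : c < 2 := by
    by_contra h
    push_neg at h
    have : 2 * K ≤ K * c := by
      calc 2 * K = K * 2 := by ring
      _ ≤ K * c := Nat.mul_le_mul_left _ h
    omega
  interval_cases c <;> omega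

lemma st16chi_period (R S d n : ℕ) : st16chi R S (n + 2 * R * d) = st16chi R S n := by
  unfold st16chi
  rw [show n + 2 * R * d = n + (2 * R) * d by ring, Nat.add_mul_mod_self_left]

lemma st16chi_reflect (R S n m d : ℕ) (hS : 1 ≤ S) (hSR : S ≤ R)
    (h : n + m + 1 = 2 * R * d) : st16chi R S n = st16chi R S m := by
  have hR : 0 < R := le_trans hS hSR
  have h2R : 0 < 2 * R := by omega
  have hn'lt : n % (2 * R) < 2 * R := Nat.mod_lt _ h2R
  have hm'lt : m % (2 * R) < 2 * R := Nat.mod_lt _ h2R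
  have hmod : (n % (2 * R) + m % (2 * R) + 1) % (2 * R) = 0 := by
    have h0 : (n + m + 1) % (2 * R) = 0 := by
      rw [h, Nat.mul_mod_right]
    have e : (n % (2 * R) + m % (2 * R) + 1) ≡ (n + m + 1) [MOD 2 * R] :=
      Nat.ModEq.add_right 1 ((Nat.mod_modEq n (2 * R)).add (Nat.mod_modEq m (2 * R)))
    rw [Nat.ModEq] at e; rw [e]; exact h0
  have hsum : n % (2 * R) + m % (2 * R) + 1 = 2 * R :=
    st16_eq_of_mod (2 * R) _ (by omega) (by omega) hmod
  unfold st16chi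
  exact if_congr (by omega) rfl rfl

lemma st16_window (r p L b j : ℕ) (hj : j < r) :
    (r * p ≤ b * r + j ∧ b * r + j < r * (p + L)) ↔ (p ≤ b ∧ b < p + L) := by
  constructor
  · rintro ⟨h1, h2⟩
    constructor
    · by_contra h
      push_neg at h
      have hb1 : b + 1 ≤ p := h
      have : b * r + j < r * p := by
        calc b * r + j < b * r + r := by omega
        _ = (b + 1) * r := by ring
        _ ≤ p * r := Nat.mul_le_mul_right _ hb1
        _ = r * p := by ring
      omega
    · have h3 : r * b < r * (p + L) := by
        calc r * b = b * r := by ring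
        _ ≤ b * r + j := by omega
        _ < r * (p + L) := h2
      exact Nat.lt_of_mul_lt_mul_left h3
  · rintro ⟨h1, h2⟩
    constructor
    · calc r * p ≤ r * b := Nat.mul_le_mul_left _ h1
      _ = b * r := by ring
      _ ≤ b * r + j := by omega
    · calc b * r + j < b * r + r := by omega
      _ = (b + 1) * r := by ring
      _ ≤ (p + L) * r := Nat.mul_le_mul_right _ (by omega)
      _ = r * (p + L) := by ring

lemma st16chi_block (R S r t p L : ℕ) (hr : 0 < r) (hR : 0 < R)
    (h2R : 2 * R = t * r) (hRS : R = S + r * p) (hS2 : S + S = r * L) (a j : ℕ) (hj : j < r) :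
    st16chi R S (a * r + j) = if p ≤ a % t ∧ a % t < p + L then 1 else 0 := by
  have ht : 0 < t := by
    rcases Nat.eq_zero_or_pos t with h | h
    · exfalso; rw [h] at h2R; simp at h2R; omega
    · exact h
  have hmod : (a * r + j) % (2 * R) = (a % t) * r + j := by
    rw [h2R]
    conv_lhs => rw [show a * r + j = (a % t) * r + j + (a / t) * (t * r) by
      conv_lhs => rw [show a = t * (a / t) + a % t from (Nat.div_add_mod a t).symm]
      ring]
    rw [Nat.add_mul_mod_self_right]
    apply Nat.mod_eq_of_lt
    calc (a % t) * r + j < (a % t) * r + r := by omega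
    _ = (a % t + 1) * r := by ring
    _ ≤ t * r := Nat.mul_le_mul_right _ (by have := Nat.mod_lt a ht; omega)
  have hsub : R - S = r * p := by omega
  have hadd : R + S = r * (p + L) := by rw [Nat.mul_add, ← hS2]; omega
  unfold st16chi
  rw [hmod, hsub, hadd, if_congr (st16_window r p L (a % t) j hj) rfl rfl]

lemma st16_sum_split (f g : ℕ → ℝ) (r M : ℕ) (c : ℝ)
    (hf : ∀ a, ∀ j < r, f (a * r + j) = f (a * r))
    (hg : ∀ a, ∑ j ∈ Finset.range r, g (a * r + j) = c) :
    ∑ n ∈ Finset.range (M * r), f n * g n = c * ∑ a ∈ Finset.range M, f (a * r) := by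
  induction M with
  | zero => simp
  | succ M ih =>
    rw [show (M + 1) * r = M * r + r by ring, Finset.sum_range_add, ih,
      Finset.sum_range_succ]
    have : ∑ j ∈ Finset.range r, f (M * r + j) * g (M * r + j)
        = f (M * r) * ∑ j ∈ Finset.range r, g (M * r + j) := by
      rw [Finset.mul_sum]
      exact Finset.sum_congr rfl fun j hj => by
        rw [hf M j (Finset.mem_range.mp hj)]
    rw [this, hg M]
    ring

lemma st16_blocks (g : ℕ → ℝ) (r : ℕ) (hper : ∀ n, g (n + 2 * r) = g n)
    (hrefl : ∀ n m, n + m + 1 = 2 * r → g n = g m) (a : ℕ) :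
    ∑ j ∈ Finset.range r, g (a * r + j) = ∑ j ∈ Finset.range r, g j := by
  induction a using Nat.strong_induction_on with
  | _ a ih =>
    match a with
    | 0 => simp
    | 1 =>
      have h1 : ∀ j < r, g (1 * r + j) = g (r - 1 - j) := by
        intro j hj
        exact hrefl (1 * r + j) (r - 1 - j) (by omega)
      calc ∑ j ∈ Finset.range r, g (1 * r + j)
          = ∑ j ∈ Finset.range r, g (r - 1 - j) :=
            Finset.sum_congr rfl fun j hj => h1 j (Finset.mem_range.mp hj)
        _ = ∑ j ∈ Finset.range r, g j := Finset.sum_range_reflect g r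
    | (a + 2) =>
      have h2 : ∀ j, g ((a + 2) * r + j) = g (a * r + j) := by
        intro j
        rw [show (a + 2) * r + j = a * r + j + 2 * r by ring, hper]
      calc ∑ j ∈ Finset.range r, g ((a + 2) * r + j)
          = ∑ j ∈ Finset.range r, g (a * r + j) :=
            Finset.sum_congr rfl fun j _ => h2 j
        _ = ∑ j ∈ Finset.range r, g j := ih a (by omega)

lemma st16_periodic_iter (g : ℕ → ℝ) (t : ℕ) (h : ∀ n, g (n + t) = g n) (u j : ℕ) :
    g (u * t + j) = g j := by
  induction u with
  | zero => simp
  | succ u ih => rw [show (u + 1) * t + j = u * t + j + t by ring, h, ih]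

lemma st16_sum_periodic (g : ℕ → ℝ) (t u : ℕ) (h : ∀ n, g (n + t) = g n) :
    ∑ n ∈ Finset.range (u * t), g n = u * ∑ n ∈ Finset.range t, g n := by
  induction u with
  | zero => simp
  | succ u ih =>
    rw [show (u + 1) * t = u * t + t by ring, Finset.sum_range_add, ih,
      Finset.sum_congr rfl fun j _ => st16_periodic_iter g t h u j]
    push_cast
    ring

lemma st16_count_window (t p L : ℕ) (h : p + L ≤ t) :
    ∑ a ∈ Finset.range t, (if p ≤ a ∧ a < p + L then (1 : ℝ) else 0) = L := by
  rw [Finset.sum_boole]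
  have : (Finset.range t).filter (fun a => p ≤ a ∧ a < p + L) = Finset.Ico p (p + L) := by
    ext a
    simp only [Finset.mem_filter, Finset.mem_range, Finset.mem_Ico]
    omega
  rw [this, Nat.card_Ico]
  norm_cast
  omega

lemma st16_chi_block' (Bb Ee A k c d : ℕ) (hA1 : 1 ≤ A) (hB1 : 1 ≤ Bb)
    (hBE : Bb * Ee = A) (hk : k ≤ c) (hcd : c ≤ d) (a j : ℕ) (hj : j < Bb ^ k * A ^ (d - c)) :
    st16chi (Bb ^ k * A ^ d) (A ^ d) (a * (Bb ^ k * A ^ (d - c)) + j)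
      = if Ee ^ k * A ^ (c - k) * (Bb ^ k - 1) ≤ a % (2 * A ^ c) ∧
           a % (2 * A ^ c) < Ee ^ k * A ^ (c - k) * (Bb ^ k - 1) + 2 * (Ee ^ k * A ^ (c - k))
        then 1 else 0 := by
  have hApos : 0 < A := hA1
  have hBk : 1 ≤ Bb ^ k := Nat.one_le_pow _ _ (by omega)
  have e1 : A ^ c * A ^ (d - c) = A ^ d := by rw [← pow_add]; congr 1; omega
  have e2 : A ^ (c - k) * A ^ (d - c) = A ^ (d - k) := by rw [← pow_add]; congr 1; omega
  have e3 : A ^ k * A ^ (d - k) = A ^ d := by rw [← pow_add]; congr 1; omega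
  have key : Bb ^ k * (Ee ^ k * A ^ (d - k)) = A ^ d := by
    rw [← mul_assoc, ← mul_pow, hBE, e3]
  refine st16chi_block _ _ _ _ _ _ ?_ ?_ ?_ ?_ ?_ a j hj
  · exact Nat.mul_pos hBk (pow_pos hApos _)
  · exact Nat.mul_pos hBk (pow_pos hApos _)
  · rw [← e1]; ring
  · obtain ⟨C, hC⟩ : ∃ C, Bb ^ k = C + 1 := ⟨Bb ^ k - 1, by omega⟩
    rw [hC, Nat.add_sub_cancel]
    have key' : (C + 1) * (Ee ^ k * A ^ (d - k)) = A ^ d := by rw [← hC]; exact key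
    calc (C + 1) * A ^ d = A ^ d + C * ((C + 1) * (Ee ^ k * A ^ (d - k))) := by
          rw [key']; ring
      _ = A ^ d + C * ((C + 1) * (Ee ^ k * (A ^ (c - k) * A ^ (d - c)))) := by rw [e2]
      _ = A ^ d + (C + 1) * A ^ (d - c) * (Ee ^ k * A ^ (c - k) * C) := by ring
  · rw [← key, ← e2]; ring

lemma st16_block_const (Bb Ee A k c d : ℕ) (hA1 : 1 ≤ A) (hB1 : 1 ≤ Bb)
    (hBE : Bb * Ee = A) (hk : k ≤ c) (hcd : c ≤ d) (a j : ℕ) (hj : j < Bb ^ k * A ^ (d - c)) :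
    st16chi (Bb ^ k * A ^ d) (A ^ d) (a * (Bb ^ k * A ^ (d - c)) + j)
      = st16chi (Bb ^ k * A ^ d) (A ^ d) (a * (Bb ^ k * A ^ (d - c))) := by
  have h0 : 0 < Bb ^ k * A ^ (d - c) :=
    Nat.mul_pos (Nat.one_le_pow _ _ (by omega)) (pow_pos (by omega) _)
  rw [st16_chi_block' Bb Ee A k c d hA1 hB1 hBE hk hcd a j hj,
    show a * (Bb ^ k * A ^ (d - c)) = a * (Bb ^ k * A ^ (d - c)) + 0 by ring,
    st16_chi_block' Bb Ee A k c d hA1 hB1 hBE hk hcd a 0 h0]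

lemma st16_sum_g_zero (r : ℕ) (hr : 1 ≤ r) (tk : ℝ) (htk : (r : ℝ) * tk = 1) :
    ∑ j ∈ Finset.range r, (st16chi r 1 j - tk) = 0 := by
  have h1 : ∀ j ∈ Finset.range r, st16chi r 1 j = if j = r - 1 then (1 : ℝ) else 0 := by
    intro j hj
    rw [Finset.mem_range] at hj
    unfold st16chi
    rw [Nat.mod_eq_of_lt (by omega)]
    exact if_congr (by omega) rfl rfl
  rw [Finset.sum_sub_distrib, Finset.sum_congr rfl h1,
    Finset.sum_ite_eq' (Finset.range r) (r - 1) (fun _ => (1 : ℝ)),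
    if_pos (Finset.mem_range.mpr (by omega)), Finset.sum_const, Finset.card_range,
    nsmul_eq_mul, htk]
  ring

lemma st16_discrete (τ : ℝ) (Bb Ee A k i₁ i₂ i₃ i₄ : ℕ) (hA1 : 1 ≤ A) (hB1 : 1 ≤ Bb)
    (hBE : Bb * Ee = A) (hbk : (Bb : ℝ) ^ k * τ ^ k = 1)
    (hak : (A : ℝ) ^ k * τ ^ k = (Ee : ℝ) ^ k)
    (h12 : i₁ ≤ i₂) (h23 : i₂ ≤ i₃) (h34 : i₃ ≤ i₄)
    (hcond : i₁ + k ≤ i₂ ∨ i₃ + k ≤ i₄) :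
    ∑ n ∈ Finset.range (2 * (Bb ^ k * A ^ i₄)),
      ((st16chi (Bb ^ k * A ^ (i₄ - i₁)) (A ^ (i₄ - i₁)) n - τ ^ k) *
        (st16chi (Bb ^ k * A ^ (i₄ - i₂)) (A ^ (i₄ - i₂)) n - τ ^ k) *
        (st16chi (Bb ^ k * A ^ (i₄ - i₃)) (A ^ (i₄ - i₃)) n - τ ^ k) *
        (st16chi (Bb ^ k * A ^ (i₄ - i₄)) (A ^ (i₄ - i₄)) n - τ ^ k)) = 0 := by
  have hApos : 0 < A := hA1
  have hBk : 1 ≤ Bb ^ k := Nat.one_le_pow _ _ (by omega)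
  have hS1 : ∀ s : ℕ, 1 ≤ A ^ s := fun s => Nat.one_le_pow _ _ hApos
  have hSR : ∀ s : ℕ, A ^ s ≤ Bb ^ k * A ^ s := fun s =>
    Nat.le_mul_of_pos_left _ (by omega)
  have hbkcast : ((Bb ^ k : ℕ) : ℝ) * τ ^ k = 1 := by push_cast; exact hbk
  rw [Nat.sub_self, pow_zero, mul_one]
  rcases hcond with hc | hc
  · -- case i₁ + k ≤ i₂ : coarse factor i₁, fine block = period of scale i₂
    have hsplit4 : A ^ i₄ = A ^ i₂ * A ^ (i₄ - i₂) := by rw [← pow_add]; congr 1; omega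
    have hN : 2 * (Bb ^ k * A ^ i₄) = (2 * A ^ i₂) * (Bb ^ k * A ^ (i₄ - i₂)) := by
      rw [hsplit4]; ring
    rw [hN]
    have hrpos : 0 < Bb ^ k * A ^ (i₄ - i₂) := Nat.mul_pos (by omega) (pow_pos hApos _)
    -- the three fine factors
    have hee : ∀ i, i₂ ≤ i → i ≤ i₄ →
        2 * (Bb ^ k * A ^ (i₄ - i₂)) = 2 * (Bb ^ k * A ^ (i₄ - i)) * A ^ (i - i₂) := by
      intro i hi2 hi4
      have h : A ^ (i₄ - i) * A ^ (i - i₂) = A ^ (i₄ - i₂) := by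
        rw [← pow_add]; congr 1; omega
      rw [← h]; ring
    have hper : ∀ i, i₂ ≤ i → i ≤ i₄ → ∀ n,
        st16chi (Bb ^ k * A ^ (i₄ - i)) (A ^ (i₄ - i)) (n + 2 * (Bb ^ k * A ^ (i₄ - i₂)))
          = st16chi (Bb ^ k * A ^ (i₄ - i)) (A ^ (i₄ - i)) n := by
      intro i hi2 hi4 n
      rw [hee i hi2 hi4]
      exact st16chi_period _ _ _ _
    have hrefl : ∀ i, i₂ ≤ i → i ≤ i₄ → ∀ n m, n + m + 1 = 2 * (Bb ^ k * A ^ (i₄ - i₂)) →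
        st16chi (Bb ^ k * A ^ (i₄ - i)) (A ^ (i₄ - i)) n
          = st16chi (Bb ^ k * A ^ (i₄ - i)) (A ^ (i₄ - i)) m := by
      intro i hi2 hi4 n m hnm
      exact st16chi_reflect _ _ n m (A ^ (i - i₂)) (hS1 _) (hSR _)
        (by rw [hnm, hee i hi2 hi4])
    have hper4 : ∀ n, st16chi (Bb ^ k) 1 (n + 2 * (Bb ^ k * A ^ (i₄ - i₂)))
        = st16chi (Bb ^ k) 1 n := by
      intro n
      rw [show 2 * (Bb ^ k * A ^ (i₄ - i₂)) = 2 * Bb ^ k * A ^ (i₄ - i₂) by ring]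
      exact st16chi_period _ _ _ _
    have hrefl4 : ∀ n m, n + m + 1 = 2 * (Bb ^ k * A ^ (i₄ - i₂)) →
        st16chi (Bb ^ k) 1 n = st16chi (Bb ^ k) 1 m := by
      intro n m hnm
      exact st16chi_reflect _ _ n m (A ^ (i₄ - i₂)) le_rfl hBk (by rw [hnm]; ring)
    -- block sums of the product of the three fine factors are constant
    set g : ℕ → ℝ := fun n =>
      (st16chi (Bb ^ k * A ^ (i₄ - i₂)) (A ^ (i₄ - i₂)) n - τ ^ k) *
      (st16chi (Bb ^ k * A ^ (i₄ - i₃)) (A ^ (i₄ - i₃)) n - τ ^ k) *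
      (st16chi (Bb ^ k) 1 n - τ ^ k) with hg_def
    have hgper : ∀ n, g (n + 2 * (Bb ^ k * A ^ (i₄ - i₂))) = g n := by
      intro n
      simp only [hg_def]
      rw [hper i₂ le_rfl (by omega) n, hper i₃ h23 h34 n, hper4 n]
    have hgrefl : ∀ n m, n + m + 1 = 2 * (Bb ^ k * A ^ (i₄ - i₂)) → g n = g m := by
      intro n m hnm
      simp only [hg_def]
      rw [hrefl i₂ le_rfl (by omega) n m hnm, hrefl i₃ h23 h34 n m hnm, hrefl4 n m hnm]
    have hg : ∀ a, ∑ j ∈ Finset.range (Bb ^ k * A ^ (i₄ - i₂)),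
        g (a * (Bb ^ k * A ^ (i₄ - i₂)) + j) = ∑ j ∈ Finset.range (Bb ^ k * A ^ (i₄ - i₂)), g j :=
      fun a => st16_blocks g _ hgper hgrefl a
    -- the coarse factor is constant on blocks
    have hdc : (i₄ - i₁) - (i₂ - i₁) = i₄ - i₂ := by omega
    have hf : ∀ a, ∀ j < Bb ^ k * A ^ (i₄ - i₂),
        (st16chi (Bb ^ k * A ^ (i₄ - i₁)) (A ^ (i₄ - i₁)) (a * (Bb ^ k * A ^ (i₄ - i₂)) + j) - τ ^ k)
          = (st16chi (Bb ^ k * A ^ (i₄ - i₁)) (A ^ (i₄ - i₁)) (a * (Bb ^ k * A ^ (i₄ - i₂))) - τ ^ k) := by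
      intro a j hj
      have h1 := st16_block_const Bb Ee A k (i₂ - i₁) (i₄ - i₁) hA1 hB1 hBE
        (by omega) (by omega) a j (by rw [hdc]; exact hj)
      rw [hdc] at h1
      rw [h1]
    have main := st16_sum_split
      (fun n => st16chi (Bb ^ k * A ^ (i₄ - i₁)) (A ^ (i₄ - i₁)) n - τ ^ k) g
      (Bb ^ k * A ^ (i₄ - i₂)) (2 * A ^ i₂)
      (∑ j ∈ Finset.range (Bb ^ k * A ^ (i₄ - i₂)), g j) hf hg
    have reassoc : ∑ n ∈ Finset.range ((2 * A ^ i₂) * (Bb ^ k * A ^ (i₄ - i₂))),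
        ((st16chi (Bb ^ k * A ^ (i₄ - i₁)) (A ^ (i₄ - i₁)) n - τ ^ k) *
          (st16chi (Bb ^ k * A ^ (i₄ - i₂)) (A ^ (i₄ - i₂)) n - τ ^ k) *
          (st16chi (Bb ^ k * A ^ (i₄ - i₃)) (A ^ (i₄ - i₃)) n - τ ^ k) *
          (st16chi (Bb ^ k) 1 n - τ ^ k))
        = ∑ n ∈ Finset.range ((2 * A ^ i₂) * (Bb ^ k * A ^ (i₄ - i₂))),
          (st16chi (Bb ^ k * A ^ (i₄ - i₁)) (A ^ (i₄ - i₁)) n - τ ^ k) * g n := by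
      refine Finset.sum_congr rfl fun n _ => ?_
      simp only [hg_def]
      ring
    rw [reassoc, main]
    -- the sum of the coarse factor over block starts vanishes
    have hcount : ∑ a ∈ Finset.range (2 * A ^ i₂),
        (st16chi (Bb ^ k * A ^ (i₄ - i₁)) (A ^ (i₄ - i₁)) (a * (Bb ^ k * A ^ (i₄ - i₂))) - τ ^ k)
          = 0 := by
      have hval : ∀ a : ℕ,
          st16chi (Bb ^ k * A ^ (i₄ - i₁)) (A ^ (i₄ - i₁)) (a * (Bb ^ k * A ^ (i₄ - i₂)))
            = if Ee ^ k * A ^ ((i₂ - i₁) - k) * (Bb ^ k - 1) ≤ a % (2 * A ^ (i₂ - i₁)) ∧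
                a % (2 * A ^ (i₂ - i₁)) < Ee ^ k * A ^ ((i₂ - i₁) - k) * (Bb ^ k - 1)
                  + 2 * (Ee ^ k * A ^ ((i₂ - i₁) - k))
              then 1 else 0 := by
        intro a
        have h1 := st16_chi_block' Bb Ee A k (i₂ - i₁) (i₄ - i₁) hA1 hB1 hBE
          (by omega) (by omega) a 0 (by rw [hdc]; omega)
        rw [hdc, Nat.add_zero] at h1
        exact h1
      rw [Finset.sum_sub_distrib, Finset.sum_congr rfl fun a _ => hval a,
        Finset.sum_const, Finset.card_range, nsmul_eq_mul]
      have hM : 2 * A ^ i₂ = A ^ i₁ * (2 * A ^ (i₂ - i₁)) := by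
        rw [show A ^ i₂ = A ^ i₁ * A ^ (i₂ - i₁) by rw [← pow_add]; congr 1; omega]; ring
      rw [hM, st16_sum_periodic _ _ _ (fun n => by rw [Nat.add_mod_right])]
      have hmodeq : ∀ a ∈ Finset.range (2 * A ^ (i₂ - i₁)),
          (if Ee ^ k * A ^ ((i₂ - i₁) - k) * (Bb ^ k - 1) ≤ a % (2 * A ^ (i₂ - i₁)) ∧
              a % (2 * A ^ (i₂ - i₁)) < Ee ^ k * A ^ ((i₂ - i₁) - k) * (Bb ^ k - 1)
                + 2 * (Ee ^ k * A ^ ((i₂ - i₁) - k)) then (1:ℝ) else 0)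
            = if Ee ^ k * A ^ ((i₂ - i₁) - k) * (Bb ^ k - 1) ≤ a ∧
                a < Ee ^ k * A ^ ((i₂ - i₁) - k) * (Bb ^ k - 1)
                  + 2 * (Ee ^ k * A ^ ((i₂ - i₁) - k)) then (1:ℝ) else 0 := by
        intro a ha
        rw [Finset.mem_range] at ha
        rw [Nat.mod_eq_of_lt ha]
      rw [Finset.sum_congr rfl hmodeq]
      have hpL : Ee ^ k * A ^ ((i₂ - i₁) - k) * (Bb ^ k - 1)
          + 2 * (Ee ^ k * A ^ ((i₂ - i₁) - k)) ≤ 2 * A ^ (i₂ - i₁) := by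
        obtain ⟨C, hC⟩ : ∃ C, Bb ^ k = C + 1 := ⟨Bb ^ k - 1, by omega⟩
        have hsplit : A ^ (i₂ - i₁) = Bb ^ k * (Ee ^ k * A ^ ((i₂ - i₁) - k)) := by
          have hx : A ^ k * A ^ ((i₂ - i₁) - k) = A ^ (i₂ - i₁) := by
            rw [← pow_add]; congr 1; omega
          rw [← hx, ← hBE, mul_pow]; ring
        rw [hsplit, hC, Nat.add_sub_cancel]
        have h1 : (Ee ^ k * A ^ ((i₂ - i₁) - k)) * (C + 2)
            ≤ (Ee ^ k * A ^ ((i₂ - i₁) - k)) * (2 * (C + 1)) :=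
          Nat.mul_le_mul_left _ (by omega)
        calc Ee ^ k * A ^ ((i₂ - i₁) - k) * C + 2 * (Ee ^ k * A ^ ((i₂ - i₁) - k))
            = (Ee ^ k * A ^ ((i₂ - i₁) - k)) * (C + 2) := by ring
          _ ≤ (Ee ^ k * A ^ ((i₂ - i₁) - k)) * (2 * (C + 1)) := h1
          _ = 2 * ((C + 1) * (Ee ^ k * A ^ ((i₂ - i₁) - k))) := by ring
      rw [st16_count_window _ _ _ hpL]
      -- real identity
      have e : (A : ℝ) ^ i₁ * (A : ℝ) ^ ((i₂ - i₁) - k) * (A : ℝ) ^ k = (A : ℝ) ^ i₂ := by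
        rw [← pow_add, ← pow_add]; congr 1; omega
      have e2 : (A : ℝ) ^ i₁ * (A : ℝ) ^ (i₂ - i₁) = (A : ℝ) ^ i₂ := by
        rw [← pow_add]; congr 1; omega
      push_cast
      linear_combination 2 * τ ^ k * e - 2 * (A : ℝ) ^ i₁ * (A : ℝ) ^ ((i₂ - i₁) - k) * hak
        - 2 * τ ^ k * e2
    rw [hcount, mul_zero]
  · -- case i₃ + k ≤ i₄ : fine factor i₄, blocks of length Bb^k
    have hN : 2 * (Bb ^ k * A ^ i₄) = (2 * A ^ i₄) * Bb ^ k := by ring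
    rw [hN]
    have key : ∀ i, i + k ≤ i₄ → ∀ a j, j < Bb ^ k →
        st16chi (Bb ^ k * A ^ (i₄ - i)) (A ^ (i₄ - i)) (a * Bb ^ k + j)
          = st16chi (Bb ^ k * A ^ (i₄ - i)) (A ^ (i₄ - i)) (a * Bb ^ k) := by
      intro i hik a j hj
      have h1 := st16_block_const Bb Ee A k (i₄ - i) (i₄ - i) hA1 hB1 hBE
        (by omega) le_rfl a j (by simpa using hj)
      simpa using h1
    have hf : ∀ a, ∀ j < Bb ^ k,
        ((st16chi (Bb ^ k * A ^ (i₄ - i₁)) (A ^ (i₄ - i₁)) (a * Bb ^ k + j) - τ ^ k) *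
          (st16chi (Bb ^ k * A ^ (i₄ - i₂)) (A ^ (i₄ - i₂)) (a * Bb ^ k + j) - τ ^ k) *
          (st16chi (Bb ^ k * A ^ (i₄ - i₃)) (A ^ (i₄ - i₃)) (a * Bb ^ k + j) - τ ^ k))
          = ((st16chi (Bb ^ k * A ^ (i₄ - i₁)) (A ^ (i₄ - i₁)) (a * Bb ^ k) - τ ^ k) *
            (st16chi (Bb ^ k * A ^ (i₄ - i₂)) (A ^ (i₄ - i₂)) (a * Bb ^ k) - τ ^ k) *
            (st16chi (Bb ^ k * A ^ (i₄ - i₃)) (A ^ (i₄ - i₃)) (a * Bb ^ k) - τ ^ k)) := by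
      intro a j hj
      rw [key i₁ (by omega) a j hj, key i₂ (by omega) a j hj, key i₃ (by omega) a j hj]
    have hper4 : ∀ n, (st16chi (Bb ^ k) 1 (n + 2 * Bb ^ k) - τ ^ k)
        = (st16chi (Bb ^ k) 1 n - τ ^ k) := by
      intro n
      rw [show n + 2 * Bb ^ k = n + 2 * Bb ^ k * 1 by ring, st16chi_period]
    have hrefl4 : ∀ n m, n + m + 1 = 2 * Bb ^ k →
        (st16chi (Bb ^ k) 1 n - τ ^ k) = (st16chi (Bb ^ k) 1 m - τ ^ k) := by
      intro n m hnm
      rw [st16chi_reflect _ _ n m 1 le_rfl hBk (by omega)]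
    have hg : ∀ a, ∑ j ∈ Finset.range (Bb ^ k),
        (st16chi (Bb ^ k) 1 (a * Bb ^ k + j) - τ ^ k) = 0 := by
      intro a
      rw [st16_blocks _ (Bb ^ k) hper4 hrefl4 a]
      exact st16_sum_g_zero (Bb ^ k) hBk (τ ^ k) hbkcast
    have main := st16_sum_split
      (fun n => (st16chi (Bb ^ k * A ^ (i₄ - i₁)) (A ^ (i₄ - i₁)) n - τ ^ k) *
        (st16chi (Bb ^ k * A ^ (i₄ - i₂)) (A ^ (i₄ - i₂)) n - τ ^ k) *
        (st16chi (Bb ^ k * A ^ (i₄ - i₃)) (A ^ (i₄ - i₃)) n - τ ^ k))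
      (fun n => st16chi (Bb ^ k) 1 n - τ ^ k)
      (Bb ^ k) (2 * A ^ i₄) 0 hf hg
    rw [show (∑ n ∈ Finset.range ((2 * A ^ i₄) * Bb ^ k),
        ((st16chi (Bb ^ k * A ^ (i₄ - i₁)) (A ^ (i₄ - i₁)) n - τ ^ k) *
          (st16chi (Bb ^ k * A ^ (i₄ - i₂)) (A ^ (i₄ - i₂)) n - τ ^ k) *
          (st16chi (Bb ^ k * A ^ (i₄ - i₃)) (A ^ (i₄ - i₃)) n - τ ^ k) *
          (st16chi (Bb ^ k) 1 n - τ ^ k))) = _ from main, zero_mul]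

set_option maxHeartbeats 1000000 in
lemma st16_xiP_eq_chi (δ τ : ℝ) (hδ : 0 < δ) (k i : ℕ) (w : ℝ) (hw : 0 < w)
    (R S : ℕ) (hS1 : 1 ≤ S) (hSR : S ≤ R)
    (hR : 2 * (R : ℝ) * w = δ ^ i) (hS : 2 * (S : ℝ) * w = τ ^ k * δ ^ i)
    (n : ℕ) (x : ℝ) (hx1 : -(1 / 2) + n * w < x) (hx2 : x < -(1 / 2) + (n + 1 : ℕ) * w) :
    xiP δ τ k i x = st16chi R S n := by
  have hR1 : 1 ≤ R := le_trans hS1 hSR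
  set q := n / (2 * R) with hq
  set m := n % (2 * R) with hm
  have hnqm : 2 * R * q + m = n := Nat.div_add_mod n (2 * R)
  have hmlt : m < 2 * R := Nat.mod_lt _ (by omega)
  have hδi : (0 : ℝ) < δ ^ i := pow_pos hδ i
  have hcast : ((n : ℝ)) = 2 * R * q + m := by exact_mod_cast (congrArg (Nat.cast : ℕ → ℝ) hnqm).symm
  have hy1 : (2 * (R : ℝ) * q + m) * w < x + 1 / 2 := by
    have h := hx1; push_cast at h; nlinarith [hcast]
  have hy2 : x + 1 / 2 < (2 * (R : ℝ) * q + m + 1) * w := by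
    have h := hx2; push_cast at h; nlinarith [hcast]
  have hmR : ((m : ℝ)) + 1 ≤ 2 * R := by exact_mod_cast hmlt
  have hfloor : ⌊(x + 1 / 2) / δ ^ i⌋ = (q : ℤ) := by
    rw [Int.floor_eq_iff]
    rw [le_div_iff₀ hδi, div_lt_iff₀ hδi]
    constructor
    · push_cast
      nlinarith [mul_nonneg (Nat.cast_nonneg m : (0:ℝ) ≤ m) hw.le]
    · push_cast
      nlinarith
  have hctr : ctr δ i x = -(1 / 2) + ((q : ℝ) + 1 / 2) * δ ^ i := by
    rw [ctr, hfloor]; push_cast; ring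
  have hz1 : ((m : ℝ) - R) * w < x - ctr δ i x := by
    rw [hctr, ← hR]; nlinarith
  have hz2 : x - ctr δ i x < ((m : ℝ) + 1 - R) * w := by
    rw [hctr, ← hR]; nlinarith
  have hSw : τ ^ k * δ ^ i / 2 = (S : ℝ) * w := by rw [← hS]; ring
  rw [xiP, st16chi, hSw, ← hm]
  by_cases hC : R - S ≤ m ∧ m < R + S
  · obtain ⟨hC1, hC2⟩ := hC
    have hc1 : ((R : ℝ)) - S ≤ m := by
      have h0 : (R - S : ℕ) ≤ m := hC1
      have h' : ((R - S : ℕ) : ℝ) = (R : ℝ) - S := by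
        push_cast [Nat.cast_sub hSR]; ring
      calc ((R : ℝ)) - S = ((R - S : ℕ) : ℝ) := h'.symm
        _ ≤ m := by exact_mod_cast h0
    have hc2 : ((m : ℝ)) + 1 ≤ R + S := by exact_mod_cast hC2
    have k1 : (-(S : ℝ)) * w ≤ ((m : ℝ) - R) * w :=
      mul_le_mul_of_nonneg_right (by linarith) hw.le
    have k2 : ((m : ℝ) + 1 - R) * w ≤ (S : ℝ) * w :=
      mul_le_mul_of_nonneg_right (by linarith) hw.le
    have hA : |x - ctr δ i x| < (S : ℝ) * w := by
      rw [abs_lt]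
      constructor
      · nlinarith
      · nlinarith
    rw [if_pos hA, if_pos ⟨hC1, hC2⟩]
  · have hA : ¬ |x - ctr δ i x| < (S : ℝ) * w := by
      rw [not_and_or] at hC
      rw [not_lt]
      rcases hC with h1 | h2
      · push_neg at h1
        have hc : ((m : ℝ)) + 1 ≤ R - S := by
          have h' : m + 1 ≤ R - S := h1
          have h'' : ((m + 1 : ℕ) : ℝ) ≤ ((R - S : ℕ) : ℝ) := by exact_mod_cast h'
          push_cast [Nat.cast_sub hSR] at h''
          linarith
        have k2 : ((m : ℝ) + 1 - R) * w ≤ (-(S : ℝ)) * w :=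
          mul_le_mul_of_nonneg_right (by linarith) hw.le
        have hneg : x - ctr δ i x < -((S : ℝ) * w) := by nlinarith
        calc (S : ℝ) * w ≤ -(x - ctr δ i x) := by linarith
          _ ≤ |x - ctr δ i x| := neg_le_abs _
      · push_neg at h2
        have hc : ((R : ℝ)) + S ≤ m := by exact_mod_cast h2
        have k1 : (S : ℝ) * w ≤ ((m : ℝ) - R) * w :=
          mul_le_mul_of_nonneg_right (by linarith) hw.le
        have hpos : (S : ℝ) * w ≤ x - ctr δ i x := by nlinarith
        calc (S : ℝ) * w ≤ x - ctr δ i x := hpos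
          _ ≤ |x - ctr δ i x| := le_abs_self _
    rw [if_neg hA, if_neg hC]

lemma st16_integral_eq_sum (F : ℝ → ℝ) (N : ℕ) (w : ℝ) (hw : 0 < w) (v : ℕ → ℝ)
    (hNw : (N : ℝ) * w = 1)
    (hF : ∀ n < N, ∀ x ∈ Set.Ioo (-(1 / 2) + n * w) (-(1 / 2) + (n + 1 : ℕ) * w), F x = v n) :
    ∫ x in Set.Ioo (-(1 / 2) : ℝ) (1 / 2), F x = ∑ n ∈ Finset.range N, v n * w := by
  set a : ℕ → ℝ := fun n => -(1 / 2) + n * w with ha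
  have hlt : ∀ n : ℕ, a n < a (n + 1) := by
    intro n; simp only [ha]; push_cast; nlinarith
  have key : ∀ n < N, ∫ x in (a n)..(a (n + 1)), F x = v n * w := by
    intro n hn
    rw [intervalIntegral.integral_of_le (hlt n).le, integral_Ioc_eq_integral_Ioo]
    have hEq : Set.EqOn F (fun _ => v n) (Set.Ioo (a n) (a (n + 1))) := by
      intro x hx
      exact hF n hn x (by simpa [ha] using hx)
    rw [setIntegral_congr_fun measurableSet_Ioo hEq, setIntegral_const]
    rw [Real.volume_real_Ioo_of_le (hlt n).le]
    have : a (n + 1) - a n = w := by simp only [ha]; push_cast; ring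
    rw [this, smul_eq_mul, mul_comm]
  have hInt : ∀ n < N, IntervalIntegrable F volume (a n) (a (n + 1)) := by
    intro n hn
    rw [intervalIntegrable_iff_integrableOn_Ioo_of_le (hlt n).le]
    have hEq : Set.EqOn F (fun _ => v n) (Set.Ioo (a n) (a (n + 1))) := by
      intro x hx
      exact hF n hn x (by simpa [ha] using hx)
    exact (integrableOn_const (C := v n) (by rw [Real.volume_Ioo]; exact ENNReal.ofReal_ne_top)).congr_fun
      (fun x hx => (hEq hx).symm) measurableSet_Ioo
  have hsum := intervalIntegral.sum_integral_adjacent_intervals (μ := volume) (f := F) (a := a) (n := N) hInt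
  have ha0 : a 0 = -(1 / 2) := by simp [ha]
  have haN : a N = 1 / 2 := by simp only [ha]; linarith
  have hIoo : ∫ x in Set.Ioo (-(1 / 2) : ℝ) (1 / 2), F x = ∫ x in (a 0)..(a N), F x := by
    rw [ha0, haN, intervalIntegral.integral_of_le (by norm_num), integral_Ioc_eq_integral_Ioo]
  rw [hIoo, ← hsum]
  exact Finset.sum_congr rfl fun n hn => key n (Finset.mem_range.mp hn)


set_option maxHeartbeats 1000000 in
/-- For every k ≥ 1 and 1 ≤ i₁ ≤ i₂ ≤ i₃ ≤ i₄ with i₂ ≥ i₁ + k or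
i₄ ≥ i₃ + k, the integral over I of ξ^{(k)}_{i₁}·ξ^{(k)}_{i₂}·ξ^{(k)}_{i₃}·ξ^{(k)}_{i₄}
vanishes. -/
theorem statement16 (δ τ : ℝ) (hδ : δ ∈ Set.Ioo (0 : ℝ) 1) (hτ : τ ∈ Set.Ioo (0 : ℝ) 1)
    (hδint : ∃ m : ℕ, (m : ℝ) * δ = 1) (hτint : ∃ m : ℕ, (m : ℝ) * τ = 1)
    (hτδ : ∃ m : ℕ, (m : ℝ) * δ = τ)
    (k i₁ i₂ i₃ i₄ : ℕ) (hk : 1 ≤ k) (hi₁ : 1 ≤ i₁) (h12 : i₁ ≤ i₂) (h23 : i₂ ≤ i₃)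
    (h34 : i₃ ≤ i₄) (hcond : i₁ + k ≤ i₂ ∨ i₃ + k ≤ i₄) :
    ∫ x in Set.Ioo (-(1 / 2) : ℝ) (1 / 2),
      xiM δ τ k i₁ x * xiM δ τ k i₂ x * xiM δ τ k i₃ x * xiM δ τ k i₄ x = 0 := by
  obtain ⟨hδ0, hδ1⟩ := hδ
  obtain ⟨hτ0, hτ1⟩ := hτ
  obtain ⟨A, hA⟩ := hδint
  obtain ⟨Bb, hB⟩ := hτint
  obtain ⟨Ee, hE⟩ := hτδ
  have hA1 : 1 ≤ A := by
    rcases Nat.eq_zero_or_pos A with h | h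
    · subst h; norm_num at hA
    · exact h
  have hB1 : 1 ≤ Bb := by
    rcases Nat.eq_zero_or_pos Bb with h | h
    · subst h; norm_num at hB
    · exact h
  have hE1 : 1 ≤ Ee := by
    rcases Nat.eq_zero_or_pos Ee with h | h
    · subst h; norm_num at hE; linarith
    · exact h
  have hBE : Bb * Ee = A := by
    have h1 : ((Bb * Ee : ℕ) : ℝ) * δ = 1 := by push_cast; rw [mul_assoc, hE, hB]
    have h2 : ((Bb * Ee : ℕ) : ℝ) = (A : ℝ) :=
      mul_right_cancel₀ (ne_of_gt hδ0) (h1.trans hA.symm)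
    exact_mod_cast h2
  have hbk : (Bb : ℝ) ^ k * τ ^ k = 1 := by rw [← mul_pow, hB, one_pow]
  have hak : (A : ℝ) ^ k * τ ^ k = (Ee : ℝ) ^ k := by
    have hAcast : (A : ℝ) = (Bb : ℝ) * Ee := by exact_mod_cast hBE.symm
    rw [hAcast, mul_pow, mul_comm ((Bb : ℝ) ^ k) _, mul_assoc, hbk, mul_one]
  have hpow : ∀ i ≤ i₄, (A : ℝ) ^ (i₄ - i) * δ ^ i₄ = δ ^ i := by
    intro i hi
    have h1 : (A : ℝ) ^ (i₄ - i) * δ ^ (i₄ - i) = 1 := by rw [← mul_pow, hA, one_pow]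
    have h2 : δ ^ (i₄ - i) * δ ^ i = δ ^ i₄ := by rw [← pow_add]; congr 1; omega
    calc (A : ℝ) ^ (i₄ - i) * δ ^ i₄ = ((A : ℝ) ^ (i₄ - i) * δ ^ (i₄ - i)) * δ ^ i := by
          rw [← h2]; ring
      _ = δ ^ i := by rw [h1, one_mul]
  set w : ℝ := τ ^ k * δ ^ i₄ / 2 with hw_def
  have hw : 0 < w := by rw [hw_def]; positivity
  have hRw : ∀ i ≤ i₄, 2 * ((Bb ^ k * A ^ (i₄ - i) : ℕ) : ℝ) * w = δ ^ i := by
    intro i hi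
    rw [hw_def]; push_cast
    linear_combination ((A : ℝ) ^ (i₄ - i) * δ ^ i₄) * hbk + hpow i hi
  have hSw : ∀ i ≤ i₄, 2 * ((A ^ (i₄ - i) : ℕ) : ℝ) * w = τ ^ k * δ ^ i := by
    intro i hi
    rw [hw_def]; push_cast
    linear_combination τ ^ k * hpow i hi
  have hNw : ((2 * (Bb ^ k * A ^ i₄) : ℕ) : ℝ) * w = 1 := by
    have h4 : (A : ℝ) ^ i₄ * δ ^ i₄ = 1 := by rw [← mul_pow, hA, one_pow]
    rw [hw_def]; push_cast
    linear_combination ((A : ℝ) ^ i₄ * δ ^ i₄) * hbk + h4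
  have hF : ∀ n < 2 * (Bb ^ k * A ^ i₄),
      ∀ x ∈ Set.Ioo (-(1 / 2) + n * w) (-(1 / 2) + ((n + 1 : ℕ) : ℝ) * w),
        xiM δ τ k i₁ x * xiM δ τ k i₂ x * xiM δ τ k i₃ x * xiM δ τ k i₄ x
          = (st16chi (Bb ^ k * A ^ (i₄ - i₁)) (A ^ (i₄ - i₁)) n - τ ^ k) *
            (st16chi (Bb ^ k * A ^ (i₄ - i₂)) (A ^ (i₄ - i₂)) n - τ ^ k) *
            (st16chi (Bb ^ k * A ^ (i₄ - i₃)) (A ^ (i₄ - i₃)) n - τ ^ k) *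
            (st16chi (Bb ^ k * A ^ (i₄ - i₄)) (A ^ (i₄ - i₄)) n - τ ^ k) := by
    intro n hn x hx
    have hxiM : ∀ i ≤ i₄, xiM δ τ k i x
        = st16chi (Bb ^ k * A ^ (i₄ - i)) (A ^ (i₄ - i)) n - τ ^ k := by
      intro i hi
      rw [xiM, st16_xiP_eq_chi δ τ hδ0 k i w hw (Bb ^ k * A ^ (i₄ - i)) (A ^ (i₄ - i))
        (Nat.one_le_pow _ _ (by omega)) (Nat.le_mul_of_pos_left _ (by positivity))
        (hRw i hi) (hSw i hi) n x hx.1 hx.2]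
    rw [hxiM i₁ (by omega), hxiM i₂ (by omega), hxiM i₃ (by omega), hxiM i₄ le_rfl]
  rw [st16_integral_eq_sum _ (2 * (Bb ^ k * A ^ i₄)) w hw _ hNw hF, ← Finset.sum_mul,
    st16_discrete τ Bb Ee A k i₁ i₂ i₃ i₄ hA1 hB1 hBE hbk hak h12 h23 h34 hcond, zero_mul]
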